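/- The supremum of E|X-Y|² over all coherent pairs (X,Y) with X independent of Y equals sup_{n ∈ ℤ₊} sup over bipartite graphs G ∈ B(n,n) of (1/n⁴) Σ_{i,j=1}^n |deg(x_i) - deg(y_j)|². -/

import Mathlib

open MeasureTheory ProbabilityTheory

/-- A pair of random variables `(X, Y)` on a probability space is *coherent* if there are an
event `A` and sub-σ-algebras `G`, `H` such that `X = E[1_A | G]` and `Y = E[1_A | H]` a.s. -/
def IsCoherentPair {Ω : Type} [m0 : MeasurableSpace Ω] (μ : Measure Ω) (X Y : Ω → ℝ) : Prop :=
  ∃ (A : Set Ω) (G H : MeasurableSpace Ω),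
    MeasurableSet A ∧ G ≤ m0 ∧ H ≤ m0 ∧
    X =ᵐ[μ] μ[A.indicator (fun _ => (1 : ℝ)) | G] ∧
    Y =ᵐ[μ] μ[A.indicator (fun _ => (1 : ℝ)) | H]

/-- The set of values `E|X - Y|^k` over all independent coherent pairs `(X, Y)`. -/
def coherentIndepPowVals (k : ℕ) : Set ℝ :=
  { r : ℝ | ∃ (Ω : Type) (m0 : MeasurableSpace Ω) (μ : Measure Ω),
      IsProbabilityMeasure μ ∧ ∃ X Y : Ω → ℝ,
        IsCoherentPair μ X Y ∧ IndepFun X Y μ ∧ r = ∫ ω, |X ω - Y ω| ^ k ∂μ }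

/-- The set of values `(1/n^{2+k}) Σ_{i,j} |deg(x_i) - deg(y_j)|^k` over all `n ≥ 1` and all
bipartite graphs in `B(n,n)`, encoded by their biadjacency matrices `A : Fin n → Fin n → Bool`;
`deg(x_i)` is the `i`-th row sum and `deg(y_j)` the `j`-th column sum of `A`. -/
def bipartiteDegVals (k : ℕ) : Set ℝ :=
  { r : ℝ | ∃ n : ℕ, 0 < n ∧ ∃ A : Fin n → Fin n → Bool,
      r = (1 / (n : ℝ) ^ (2 + k)) * ∑ i : Fin n, ∑ j : Fin n,
        |(∑ l : Fin n, if A i l then (1 : ℝ) else 0) -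
          (∑ l : Fin n, if A l j then (1 : ℝ) else 0)| ^ k }


noncomputable def myμ : Measure Bool := (2:ENNReal)⁻¹ • (Measure.dirac true + Measure.dirac false)

instance : IsProbabilityMeasure myμ := by
  constructor
  simp [myμ]
  rw [ENNReal.inv_two_add_inv_two]

lemma myint (g : Bool → ℝ) : ∫ ω, g ω ∂myμ = 2⁻¹ * (g true + g false) := by
  rw [myμ]
  rw [integral_smul_measure, integral_add_measure (by simp) (by simp)]
  simp [integral_dirac]

noncomputable def Xex : Bool → ℝ := ({true} : Set Bool).indicator (fun _ => (1:ℝ))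

lemma bip_le (r : ℝ) (hr : ∃ n : ℕ, 0 < n ∧ ∃ A : Fin n → Fin n → Bool,
      r = (1 / (n : ℝ) ^ (2 + 2)) * ∑ i : Fin n, ∑ j : Fin n,
        |(∑ l : Fin n, if A i l then (1 : ℝ) else 0) -
          (∑ l : Fin n, if A l j then (1 : ℝ) else 0)| ^ 2) : r ≤ 1/4 := by
  obtain ⟨n, hn, A, rfl⟩ := hr
  set d : Fin n → ℝ := fun i => ∑ l : Fin n, if A i l then (1 : ℝ) else 0 with hd
  set e : Fin n → ℝ := fun j => ∑ l : Fin n, if A l j then (1 : ℝ) else 0 with he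
  set S : ℝ := ∑ i : Fin n, d i with hS
  have hSe : S = ∑ j : Fin n, e j := Finset.sum_comm
  have hd_le : ∀ i, d i ≤ n := by
    intro i
    calc d i ≤ ∑ _l : Fin n, (1:ℝ) := Finset.sum_le_sum (fun l _ => by split <;> norm_num)
    _ = n := by simp
  have he_le : ∀ j, e j ≤ n := by
    intro j
    calc e j ≤ ∑ _l : Fin n, (1: ℝ) := Finset.sum_le_sum (fun l _ => by split <;> norm_num)
    _ = n := by simp
  have hd_nn : ∀ i, 0 ≤ d i := fun i => Finset.sum_nonneg (fun l _ => by split <;> norm_num)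
  have he_nn : ∀ j, 0 ≤ e j := fun j => Finset.sum_nonneg (fun l _ => by split <;> norm_num)
  have hS_nn : 0 ≤ S := Finset.sum_nonneg (fun i _ => hd_nn i)
  -- main sum identity
  have hexp : ∑ i : Fin n, ∑ j : Fin n, |d i - e j| ^ 2
      = (n : ℝ) * ∑ i, (d i)^2 + (n:ℝ) * ∑ j, (e j)^2 - 2 * S * S := by
    have : ∀ i j, |d i - e j|^2 = (d i)^2 + (e j)^2 - 2 * (d i * e j) := by
      intro i j; rw [sq_abs]; ring
    simp only [this, Finset.sum_sub_distrib, Finset.sum_add_distrib, Finset.sum_const,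
      Finset.card_univ, Fintype.card_fin, nsmul_eq_mul, ← Finset.mul_sum, ← Finset.sum_mul]
    ring_nf
    rw [← hS, ← hSe]; ring
  -- key inequality chain
  have key : (n:ℝ) * ∑ i, (d i)^2 + (n:ℝ) * ∑ j, (e j)^2 ≤ (n:ℝ)^2 * S + S * S := by
    have h1 : (n:ℝ) * ∑ i, (d i)^2 = ∑ i : Fin n, ∑ j : Fin n,
        (if A i j then (1:ℝ) else 0) * ((n:ℝ) * d i) := by
      rw [Finset.mul_sum]
      refine Finset.sum_congr rfl (fun i _ => ?_)
      rw [← Finset.sum_mul]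
      simp only [hd]; ring
    have h2 : (n:ℝ) * ∑ j, (e j)^2 = ∑ i : Fin n, ∑ j : Fin n,
        (if A i j then (1:ℝ) else 0) * ((n:ℝ) * e j) := by
      rw [Finset.mul_sum, Finset.sum_comm]
      refine Finset.sum_congr rfl (fun j _ => ?_)
      rw [← Finset.sum_mul]
      simp only [he]; ring
    have h3 : ∑ i : Fin n, ∑ j : Fin n, (if A i j then (1:ℝ) else 0) * ((n:ℝ) * d i)
        + ∑ i : Fin n, ∑ j : Fin n, (if A i j then (1:ℝ) else 0) * ((n:ℝ) * e j)
        ≤ ∑ i : Fin n, ∑ j : Fin n, ((if A i j then (1:ℝ) else 0) * ((n:ℝ)^2) + d i * e j) := by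
      rw [← Finset.sum_add_distrib]
      simp only [← Finset.sum_add_distrib]
      refine Finset.sum_le_sum (fun i _ => Finset.sum_le_sum (fun j _ => ?_))
      have hdi := hd_le i; have hej := he_le j
      have hdn := hd_nn i; have hen := he_nn j
      split
      · nlinarith [mul_nonneg (sub_nonneg.2 hdi) (sub_nonneg.2 hej)]
      · nlinarith [mul_nonneg hdn hen]
    have h4 : ∑ i : Fin n, ∑ j : Fin n, ((if A i j then (1:ℝ) else 0) * ((n:ℝ)^2) + d i * e j)
        = (n:ℝ)^2 * S + S * S := by
      simp only [Finset.sum_add_distrib]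
      congr 1
      · rw [hS, Finset.mul_sum]
        refine Finset.sum_congr rfl (fun i _ => ?_)
        rw [← Finset.sum_mul]
        simp only [hd]; ring
      · calc ∑ x : Fin n, ∑ y : Fin n, d x * e y
            = (∑ i : Fin n, d i) * (∑ j : Fin n, e j) := by
              rw [Finset.sum_mul_sum]
          _ = S * S := by rw [← hS, ← hSe]
    calc (n:ℝ) * ∑ i, (d i)^2 + (n:ℝ) * ∑ j, (e j)^2
        = _ + _ := by rw [h1, h2]
      _ ≤ _ := h3
      _ = _ := h4
  -- conclude
  have hT : ∑ i : Fin n, ∑ j : Fin n, |d i - e j| ^ 2 ≤ (n:ℝ)^4 / 4 := by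
    rw [hexp]
    have hSn : S ≤ (n:ℝ)^2 := by
      rw [hS]
      calc ∑ i : Fin n, d i ≤ ∑ _i : Fin n, (n:ℝ) := Finset.sum_le_sum (fun i _ => hd_le i)
        _ = (n:ℝ)^2 := by simp [sq]
    nlinarith [sq_nonneg ((n:ℝ)^2 - 2*S)]
  have hn4 : (0:ℝ) < (n:ℝ)^(2+2) := by positivity
  rw [div_mul_eq_mul_div, one_mul, div_le_iff₀ hn4]
  calc ∑ i : Fin n, ∑ j : Fin n, |d i - e j| ^ 2 ≤ (n:ℝ)^4/4 := hT
    _ = 1/4 * (n:ℝ)^(2+2) := by ring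

lemma bip_le' (r : ℝ) (hr : r ∈ bipartiteDegVals 2) : r ≤ 1/4 := bip_le r hr

lemma bip_mem : (1/4 : ℝ) ∈ bipartiteDegVals 2 := by
  refine ⟨2, by norm_num, fun i _ => i = 0, ?_⟩
  norm_num [Fin.sum_univ_two, Fin.isValue]

lemma coh_mem : (1/4 : ℝ) ∈ coherentIndepPowVals 2 := by
  refine ⟨Bool, Bool.instMeasurableSpace, myμ, inferInstance, fun _ => 2⁻¹, Xex, ?_, ?_, ?_⟩
  · refine ⟨{true}, ⊥, Bool.instMeasurableSpace, MeasurableSet.of_discrete, bot_le, le_rfl, ?_, ?_⟩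
    · rw [condExp_bot]
      have h2 : ∫ ω, ({true} : Set Bool).indicator (fun _ => (1:ℝ)) ω ∂myμ = 2⁻¹ := by
        rw [myint]; simp
      rw [h2]
    · rw [condExp_of_stronglyMeasurable le_rfl
        (stronglyMeasurable_const.indicator MeasurableSet.of_discrete)
        ((integrable_const (1:ℝ)).indicator MeasurableSet.of_discrete)]
      exact Filter.Eventually.of_forall (fun x => rfl)
  · rw [indepFun_iff_measure_inter_preimage_eq_mul]
    intro s t _ _
    by_cases h : (2⁻¹:ℝ) ∈ s
    · have hs' : (fun _ : Bool => (2⁻¹:ℝ)) ⁻¹' s = Set.univ := by ext; simp [h]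
      rw [hs', Set.univ_inter, measure_univ, one_mul]
    · have hs' : (fun _ : Bool => (2⁻¹:ℝ)) ⁻¹' s = ∅ := by ext; simp [h]
      rw [hs', Set.empty_inter]; simp
  · rw [myint]
    simp [Xex]
    norm_num

lemma coh_core {Ω : Type} {G H : MeasurableSpace Ω} [m0 : MeasurableSpace Ω]
    (μ : Measure Ω) [IsProbabilityMeasure μ] {A : Set Ω} (hA : MeasurableSet A)
    (hG : G ≤ m0) (hH : H ≤ m0)
    (hind : IndepFun (μ[A.indicator (fun _ => (1:ℝ)) | G]) (μ[A.indicator (fun _ => (1:ℝ)) | H]) μ) :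
    ∫ ω, |(μ[A.indicator (fun _ => (1:ℝ)) | G]) ω - (μ[A.indicator (fun _ => (1:ℝ)) | H]) ω| ^ 2 ∂μ
      ≤ 1/4 := by
  set f : Ω → ℝ := A.indicator (fun _ => (1 : ℝ)) with hf
  set X : Ω → ℝ := μ[f | G] with hX
  set Y : Ω → ℝ := μ[f | H] with hY
  have hf_int : Integrable f μ := (integrable_const (1:ℝ)).indicator hA
  have hf0 : ∀ ω, 0 ≤ f ω := fun ω => Set.indicator_nonneg (fun _ _ => zero_le_one) ω
  have hf1 : ∀ ω, f ω ≤ 1 := fun ω => Set.indicator_le' (fun _ _ => le_rfl) (fun _ _ => zero_le_one) ω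
  -- a.e. bounds for X and Y
  have hX0 : 0 ≤ᵐ[μ] X := condExp_nonneg (Filter.Eventually.of_forall hf0)
  have hY0 : 0 ≤ᵐ[μ] Y := condExp_nonneg (Filter.Eventually.of_forall hf0)
  have hX1 : X ≤ᵐ[μ] fun _ => (1:ℝ) := by
    have h := condExp_mono (m := G) hf_int (integrable_const (1:ℝ))
      (Filter.Eventually.of_forall hf1)
    rwa [condExp_const hG] at h
  have hY1 : Y ≤ᵐ[μ] fun _ => (1:ℝ) := by
    have h := condExp_mono (m := H) hf_int (integrable_const (1:ℝ))
      (Filter.Eventually.of_forall hf1)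
    rwa [condExp_const hH] at h
  have hX_int : Integrable X μ := integrable_condExp
  have hY_int : Integrable Y μ := integrable_condExp
  have hX_sm : AEStronglyMeasurable X μ := hX_int.aestronglyMeasurable
  have hY_sm : AEStronglyMeasurable Y μ := hY_int.aestronglyMeasurable
  -- integrability of bounded products
  have hbdd_int : ∀ u v : Ω → ℝ, AEStronglyMeasurable u μ → AEStronglyMeasurable v μ →
      (∀ᵐ ω ∂μ, |u ω| ≤ 1) → (∀ᵐ ω ∂μ, |v ω| ≤ 1) → Integrable (fun ω => u ω * v ω) μ := by
    intro u v hu hv hub hvb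
    refine Integrable.mono' (integrable_const (1:ℝ)) (hu.mul hv) ?_
    filter_upwards [hub, hvb] with ω h1 h2
    rw [Real.norm_eq_abs, abs_mul]
    calc |u ω| * |v ω| ≤ 1 * 1 := mul_le_mul h1 h2 (abs_nonneg _) zero_le_one
      _ = 1 := mul_one 1
  have hXb : ∀ᵐ ω ∂μ, |X ω| ≤ 1 := by
    filter_upwards [hX0, hX1] with ω h1 h2
    have h1' : (0:ℝ) ≤ X ω := h1
    rw [abs_le]; exact ⟨by linarith, h2⟩
  have hYb : ∀ᵐ ω ∂μ, |Y ω| ≤ 1 := by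
    filter_upwards [hY0, hY1] with ω h1 h2
    have h1' : (0:ℝ) ≤ Y ω := h1
    rw [abs_le]; exact ⟨by linarith, h2⟩
  have hfb : ∀ᵐ ω ∂μ, |f ω| ≤ 1 :=
    Filter.Eventually.of_forall (fun ω => abs_le.2 ⟨by linarith [hf0 ω], hf1 ω⟩)
  have hf_sm : AEStronglyMeasurable f μ :=
    (stronglyMeasurable_const.indicator hA).aestronglyMeasurable
  have hXX_int : Integrable (fun ω => X ω * X ω) μ := hbdd_int X X hX_sm hX_sm hXb hXb
  have hYY_int : Integrable (fun ω => Y ω * Y ω) μ := hbdd_int Y Y hY_sm hY_sm hYb hYb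
  have hXY_int : Integrable (fun ω => X ω * Y ω) μ := hbdd_int X Y hX_sm hY_sm hXb hYb
  have hXf_int : Integrable (fun ω => X ω * f ω) μ := hbdd_int X f hX_sm hf_sm hXb hfb
  have hYf_int : Integrable (fun ω => Y ω * f ω) μ := hbdd_int Y f hY_sm hf_sm hYb hfb
  -- p
  set p : ℝ := ∫ ω, f ω ∂μ with hp
  have hpX : ∫ ω, X ω ∂μ = p := integral_condExp hG
  have hpY : ∫ ω, Y ω ∂μ = p := integral_condExp hH
  have hp0 : 0 ≤ p := integral_nonneg hf0
  have hp1 : p ≤ 1 := by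
    have h := integral_mono hf_int (integrable_const (1:ℝ)) (fun ω => hf1 ω)
    simpa using h
  -- key conditional-expectation identities
  have hXid : ∫ ω, X ω * f ω ∂μ = ∫ ω, X ω * X ω ∂μ := by
    have h1 : μ[X * f | G] =ᵐ[μ] X * μ[f | G] :=
      condExp_mul_of_stronglyMeasurable_left (m := G) (μ := μ) (f := X) (g := f)
        stronglyMeasurable_condExp hXf_int hf_int
    rw [← hX] at h1
    have h2 : ∫ ω, (X * f) ω ∂μ = ∫ ω, (μ[X * f | G]) ω ∂μ := (integral_condExp hG).symm
    have h3 : ∫ ω, (μ[X * f | G]) ω ∂μ = ∫ ω, (X * X) ω ∂μ := integral_congr_ae h1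
    have h4 := h2.trans h3
    simpa [Pi.mul_apply] using h4
  have hYid : ∫ ω, Y ω * f ω ∂μ = ∫ ω, Y ω * Y ω ∂μ := by
    have h1 : μ[Y * f | H] =ᵐ[μ] Y * μ[f | H] :=
      condExp_mul_of_stronglyMeasurable_left (m := H) (μ := μ) (f := Y) (g := f)
        stronglyMeasurable_condExp hYf_int hf_int
    rw [← hY] at h1
    have h2 : ∫ ω, (Y * f) ω ∂μ = ∫ ω, (μ[Y * f | H]) ω ∂μ := (integral_condExp hH).symm
    have h3 : ∫ ω, (μ[Y * f | H]) ω ∂μ = ∫ ω, (Y * Y) ω ∂μ := integral_congr_ae h1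
    have h4 := h2.trans h3
    simpa [Pi.mul_apply] using h4
  -- independence
  have hprod : ∫ ω, X ω * Y ω ∂μ = p * p := by
    have h2 := hind.integral_mul_eq_mul_integral hX_sm hY_sm
    calc ∫ ω, X ω * Y ω ∂μ = (∫ ω, X ω ∂μ) * ∫ ω, Y ω ∂μ := by
          simpa [Pi.mul_apply] using h2
      _ = p * p := by rw [hpX, hpY]
  -- pointwise inequality, integrated
  have hptwise : ∀ᵐ ω ∂μ, (X ω + Y ω - 1) * f ω ≤ X ω * Y ω := by
    filter_upwards [hX0, hX1, hY0, hY1] with ω hx0' hx1' hy0' hy1'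
    have hx0 : (0:ℝ) ≤ X ω := hx0'
    have hy0 : (0:ℝ) ≤ Y ω := hy0'
    have hx1 : X ω ≤ 1 := hx1'
    have hy1 : Y ω ≤ 1 := hy1'
    have ht0 := hf0 ω; have ht1 := hf1 ω
    rcases le_total (X ω + Y ω) 1 with h | h
    · nlinarith [mul_nonneg hx0 hy0, mul_nonneg ht0 (by linarith : (0:ℝ) ≤ 1 - X ω - Y ω)]
    · nlinarith [mul_nonneg (by linarith : (0:ℝ) ≤ 1 - X ω) (by linarith : (0:ℝ) ≤ 1 - Y ω),
        mul_nonneg (by linarith : (0:ℝ) ≤ 1 - f ω) (by linarith : (0:ℝ) ≤ X ω + Y ω - 1)]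
  have hkey : ∫ ω, X ω * X ω ∂μ + ∫ ω, Y ω * Y ω ∂μ - p ≤ p * p := by
    have hL_int : Integrable (fun ω => (X ω + Y ω - 1) * f ω) μ := by
      have : (fun ω => (X ω + Y ω - 1) * f ω)
          = fun ω => X ω * f ω + Y ω * f ω - f ω := by funext ω; ring
      rw [this]
      have hsum_int : Integrable (fun ω => X ω * f ω + Y ω * f ω) μ := hXf_int.add hYf_int
      exact hsum_int.sub hf_int
    have hle : ∫ ω, (X ω + Y ω - 1) * f ω ∂μ ≤ ∫ ω, X ω * Y ω ∂μ :=
      integral_mono_ae hL_int hXY_int hptwise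
    have hLeq : ∫ ω, (X ω + Y ω - 1) * f ω ∂μ
        = ∫ ω, X ω * f ω ∂μ + ∫ ω, Y ω * f ω ∂μ - p := by
      have h0 : (fun ω => (X ω + Y ω - 1) * f ω)
          = fun ω => X ω * f ω + Y ω * f ω - f ω := by funext ω; ring
      have hsum_int : Integrable (fun ω => X ω * f ω + Y ω * f ω) μ := hXf_int.add hYf_int
      rw [h0, integral_sub hsum_int hf_int, integral_add hXf_int hYf_int]
    rw [hLeq, hXid, hYid, hprod] at hle
    linarith
  -- final expansion
  have hfinal : ∫ ω, |X ω - Y ω| ^ 2 ∂μ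
      = ∫ ω, X ω * X ω ∂μ + ∫ ω, Y ω * Y ω ∂μ - 2 * (p * p) := by
    have h0 : (fun ω => |X ω - Y ω| ^ 2)
        = fun ω => X ω * X ω + Y ω * Y ω - 2 * (X ω * Y ω) := by
      funext ω; rw [sq_abs]; ring
    have hsum_int : Integrable (fun ω => X ω * X ω + Y ω * Y ω) μ := hXX_int.add hYY_int
    have hmul_int : Integrable (fun ω => 2 * (X ω * Y ω)) μ := hXY_int.const_mul 2
    rw [h0, integral_sub hsum_int hmul_int, integral_add hXX_int hYY_int,
      integral_const_mul, hprod]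
  rw [hfinal]
  nlinarith [sq_nonneg (p - 1/2), hkey]

lemma coh_le (r : ℝ) (hr : r ∈ coherentIndepPowVals 2) : r ≤ 1/4 := by
  obtain ⟨Ω, m0, μ, hμ, X, Y, ⟨A, G, H, hA, hG, hH, hX, hY⟩, hind, rfl⟩ := hr
  haveI := hμ
  have hA0 : MeasurableSet[m0] A := hH _ hA
  have hind' : IndepFun (μ[A.indicator (fun _ => (1:ℝ)) | G])
      (μ[A.indicator (fun _ => (1:ℝ)) | H]) μ := hind.congr hX hY
  have hcongr : ∫ ω, |X ω - Y ω| ^ 2 ∂μ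
      = ∫ ω, |(μ[A.indicator (fun _ => (1:ℝ)) | G]) ω
          - (μ[A.indicator (fun _ => (1:ℝ)) | H]) ω| ^ 2 ∂μ := by
    refine integral_congr_ae ?_
    filter_upwards [hX, hY] with ω h1 h2
    rw [h1, h2]
  rw [hcongr]
  exact coh_core (m0 := m0) μ hA0 hG hH hind'

/-- The supremum of `E|X - Y|²` over independent coherent pairs equals
`sup_n sup_{G ∈ B(n,n)} (1/n⁴) Σ_{i,j} |deg(x_i) - deg(y_j)|²`. -/

theorem sup_coherent_indep_sq_eq_sup_bipartite :
    sSup (coherentIndepPowVals 2) = sSup (bipartiteDegVals 2) := by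
  have hc : IsGreatest (coherentIndepPowVals 2) (1/4) := ⟨coh_mem, coh_le⟩
  have hb : IsGreatest (bipartiteDegVals 2) (1/4) := ⟨bip_mem, bip_le'⟩
  rw [hc.csSup_eq, hb.csSup_eq]
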